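/- arXiv:2206.05588 — 3 statements merged into one kernel-verified Lean document; each statement's English description precedes it below -/
import Mathlib

section
/- Let n be a positive integer divisible by 8 and let C_max ⊆ F_2^n be a doubly-even self-orthogonal code of dimension n/2 − 1. Let C_1, C_2, C_3 be three pairwise distinct self-dual codes of length n each containing C_max, where C_1 is singly-even and C_2, C_3 are doubly-even. If the minimum distance of C_1 equals 2, then the minimum distances of C_2 and C_3 coincide: d(C_2) = d(C_3). -/
open Finset

/-- Hamming weight of a binary vector. -/
def wt {n : ℕ} (a : Fin n → ZMod 2) : ℕ :=
  (Finset.univ.filter fun i => a i ≠ 0).card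

/-- Number of coordinates where both vectors are 1. -/
def mu {n : ℕ} (a b : Fin n → ZMod 2) : ℕ :=
  (Finset.univ.filter fun i => a i = 1 ∧ b i = 1).card

/-- The dual code with respect to the standard inner product over F_2. -/
def dualCode {n : ℕ} (C : Submodule (ZMod 2) (Fin n → ZMod 2)) :
    Submodule (ZMod 2) (Fin n → ZMod 2) where
  carrier := {x | ∀ c ∈ C, ∑ i, x i * c i = 0}
  zero_mem' := by intro c hc; simp
  add_mem' := by
    intro x y hx hy c hc
    simp [add_mul, Finset.sum_add_distrib, hx c hc, hy c hc]
  smul_mem' := by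
    intro r x hx c hc
    simp [mul_assoc, ← Finset.mul_sum, hx c hc]

def IsSelfDual {n : ℕ} (C : Submodule (ZMod 2) (Fin n → ZMod 2)) : Prop :=
  C = dualCode C

def DoublyEven {n : ℕ} (C : Submodule (ZMod 2) (Fin n → ZMod 2)) : Prop :=
  ∀ c ∈ C, 4 ∣ wt c

def SinglyEven {n : ℕ} (C : Submodule (ZMod 2) (Fin n → ZMod 2)) : Prop :=
  ∃ c ∈ C, ¬ 4 ∣ wt c

/-- Minimum distance: smallest nonzero weight of a codeword. -/
noncomputable def minDist {n : ℕ} (C : Submodule (ZMod 2) (Fin n → ZMod 2)) : ℕ :=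
  sInf {d | ∃ c ∈ C, c ≠ 0 ∧ wt c = d}

-- auxiliary lemmas

lemma mem_dualCode {n : ℕ} {C : Submodule (ZMod 2) (Fin n → ZMod 2)}
    {x : Fin n → ZMod 2} : x ∈ dualCode C ↔ ∀ c ∈ C, ∑ i, x i * c i = 0 :=
  Iff.rfl

lemma dualCode_antitone {n : ℕ} {C C' : Submodule (ZMod 2) (Fin n → ZMod 2)}
    (h : C ≤ C') : dualCode C' ≤ dualCode C := by
  intro x hx c hc
  exact hx c (h hc)

lemma toDual_eval {n : ℕ} (x y : Fin n → ZMod 2) :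
    (Pi.basisFun (ZMod 2) (Fin n)).toDual x y = ∑ i, x i * y i := by
  have hy : y = ∑ j, y j • (Pi.basisFun (ZMod 2) (Fin n)) j := by
    funext k
    simp [Pi.basisFun_apply, Finset.sum_apply, Pi.single_apply, eq_comm]
  conv_lhs => rw [hy]
  rw [map_sum]
  simp only [map_smul, Module.Basis.toDual_apply_left, Pi.basisFun_repr, smul_eq_mul]
  exact Finset.sum_congr rfl fun i _ => mul_comm _ _

lemma finrank_dualCode {n : ℕ} (C : Submodule (ZMod 2) (Fin n → ZMod 2)) :
    Module.finrank (ZMod 2) (dualCode C) + Module.finrank (ZMod 2) C = n := by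
  classical
  set e := (Pi.basisFun (ZMod 2) (Fin n)).toDualEquiv
  have h1 : dualCode C = (Submodule.dualAnnihilator C).comap e.toLinearMap := by
    ext x
    simp only [Submodule.mem_comap, Submodule.mem_dualAnnihilator, mem_dualCode]
    constructor
    · intro h c hc
      rw [show (e.toLinearMap x) c = ∑ i, x i * c i from toDual_eval x c]
      exact h c hc
    · intro h c hc
      rw [← (toDual_eval x c)]
      exact h c hc
  have h2 : Module.finrank (ZMod 2) (dualCode C)
      = Module.finrank (ZMod 2) (Submodule.dualAnnihilator C) := by
    rw [h1, Submodule.comap_equiv_eq_map_symm]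
    exact LinearEquiv.finrank_map_eq _ _
  have h3 : Module.finrank (ZMod 2) (Submodule.dualAnnihilator C)
      = Module.finrank (ZMod 2) ((Fin n → ZMod 2) ⧸ C) :=
    (LinearEquiv.finrank_eq (Subspace.quotEquivAnnihilator C)).symm
  have h4 := Submodule.finrank_quotient_add_finrank C
  rw [h2, h3, h4]
  simp [Module.finrank_pi]

lemma wt_eq_zero_iff {n : ℕ} {a : Fin n → ZMod 2} : wt a = 0 ↔ a = 0 := by
  classical
  unfold wt
  rw [Finset.card_eq_zero, Finset.filter_eq_empty_iff]
  constructor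
  · intro h
    funext i
    by_contra hi
    exact (h (Finset.mem_univ i)) hi
  · intro h i _
    rw [congrFun h i]
    simp

lemma mu_le_wt_right {n : ℕ} (a b : Fin n → ZMod 2) : mu a b ≤ wt b := by
  classical
  apply Finset.card_le_card
  intro i hi
  simp only [Finset.mem_filter, Finset.mem_univ, true_and] at hi ⊢
  rw [hi.2]; exact one_ne_zero

lemma wt_add_mu {n : ℕ} (a b : Fin n → ZMod 2) :
    wt (a + b) + 2 * mu a b = wt a + wt b := by
  classical
  simp only [wt, mu, Finset.card_filter, Finset.mul_sum, ← Finset.sum_add_distrib]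
  refine Finset.sum_congr rfl fun i _ => ?_
  have key : ∀ x y : ZMod 2,
      ((if x + y ≠ 0 then 1 else 0) + 2 * (if x = 1 ∧ y = 1 then 1 else 0) : ℕ)
        = (if x ≠ 0 then 1 else 0) + (if y ≠ 0 then 1 else 0) := by decide
  simpa using key (a i) (b i)

lemma weights_subset {n : ℕ} (Cm C C' D : Submodule (ZMod 2) (Fin n → ZMod 2))
    (z : Fin n → ZMod 2) (hz2 : wt z = 2)
    (hleC' : Cm ≤ C')
    (hDe : DoublyEven C) (hDe' : DoublyEven C')
    (hinf : C ⊓ C' = Cm)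
    (hCD : C ≤ D) (hzD : z ∈ D)
    (hsup : C' ⊔ Submodule.span (ZMod 2) {z} = D) :
    {d | ∃ c ∈ C, c ≠ 0 ∧ wt c = d} ⊆ {d | ∃ c ∈ C', c ≠ 0 ∧ wt c = d} := by
  rintro d ⟨c, hc, hne, rfl⟩
  by_cases hm : c ∈ Cm
  · exact ⟨c, hleC' hm, hne, rfl⟩
  · have hcz : c + z ∈ D := D.add_mem (hCD hc) hzD
    rw [← hsup] at hcz
    rcases Submodule.mem_sup.mp hcz with ⟨y, hy, w, hw, hyw⟩
    rcases Submodule.mem_span_singleton.mp hw with ⟨r, rfl⟩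
    rcases (by decide : ∀ r : ZMod 2, r = 0 ∨ r = 1) r with h0 | h1
    · -- w = 0, so c + z ∈ C'
      rw [h0, zero_smul, add_zero] at hyw
      have hmem : c + z ∈ C' := hyw ▸ hy
      have h4 : 4 ∣ wt c := hDe c hc
      have h4' : 4 ∣ wt (c + z) := hDe' _ hmem
      have hμ : mu c z ≤ 2 := hz2 ▸ mu_le_wt_right c z
      have hadd := wt_add_mu c z
      rw [hz2] at hadd
      have hwtc : wt c ≠ 0 := fun h => hne (wt_eq_zero_iff.mp h)
      have heq : wt (c + z) = wt c := by omega
      refine ⟨c + z, hmem, ?_, heq⟩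
      intro h0'
      rw [h0'] at heq
      have hz0 : wt (0 : Fin n → ZMod 2) = 0 := wt_eq_zero_iff.mpr rfl
      omega
    · -- w = z, so c ∈ C', contradiction with c ∉ Cm
      rw [h1, one_smul] at hyw
      have : y = c := by
        have := add_right_cancel hyw
        exact this
      rw [this] at hy
      exact absurd (hinf ▸ Submodule.mem_inf.mpr ⟨hc, hy⟩) hm

theorem neighborhood_minDist_two {n : ℕ} (hn : 0 < n) (h8 : 8 ∣ n)
    (Cmax C1 C2 C3 : Submodule (ZMod 2) (Fin n → ZMod 2))
    (hso : Cmax ≤ dualCode Cmax) (hde : DoublyEven Cmax)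
    (hdim : Module.finrank (ZMod 2) Cmax = n / 2 - 1)
    (h12 : C1 ≠ C2) (h13 : C1 ≠ C3) (h23 : C2 ≠ C3)
    (hsd1 : IsSelfDual C1) (hsd2 : IsSelfDual C2) (hsd3 : IsSelfDual C3)
    (hle1 : Cmax ≤ C1) (hle2 : Cmax ≤ C2) (hle3 : Cmax ≤ C3)
    (hse1 : SinglyEven C1) (hde2 : DoublyEven C2) (hde3 : DoublyEven C3)
    (hd1 : minDist C1 = 2) :
    minDist C2 = minDist C3 := by
  classical
  set D := dualCode Cmax with hD
  -- finrank facts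
  have hF := fun C : Submodule (ZMod 2) (Fin n → ZMod 2) => finrank_dualCode C
  have hr2 : Module.finrank (ZMod 2) C2 = n / 2 := by
    have := hF C2; rw [← hsd2] at this; omega
  have hr3 : Module.finrank (ZMod 2) C3 = n / 2 := by
    have := hF C3; rw [← hsd3] at this; omega
  have hrD : Module.finrank (ZMod 2) D = n / 2 + 1 := by
    have := hF Cmax; rw [hdim, ← hD] at this; omega
  have hC2D : C2 ≤ D := by rw [hsd2]; exact dualCode_antitone hle2
  have hC3D : C3 ≤ D := by rw [hsd3]; exact dualCode_antitone hle3
  have hC1D' : C1 ≤ D := by rw [hsd1]; exact dualCode_antitone hle1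
  -- get z
  have hSne : {d | ∃ c ∈ C1, c ≠ 0 ∧ wt c = d}.Nonempty := by
    by_contra h
    rw [Set.not_nonempty_iff_eq_empty] at h
    rw [minDist, h, Nat.sInf_empty] at hd1
    exact absurd hd1 (by norm_num)
  have hz := Nat.sInf_mem hSne
  rw [← minDist, hd1] at hz
  obtain ⟨z, hzC1, hzne, hzwt⟩ := hz
  have hzD : z ∈ D := hC1D' hzC1
  have hz2 : z ∉ C2 := fun h => by have := hde2 z h; omega
  have hz3 : z ∉ C3 := fun h => by have := hde3 z h; omega
  -- sup facts
  have hsup2 : C2 ⊔ Submodule.span (ZMod 2) {z} = D := by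
    have hle : C2 ⊔ Submodule.span (ZMod 2) {z} ≤ D :=
      sup_le hC2D (Submodule.span_le.mpr (by simpa using hzD))
    have hlt : C2 < C2 ⊔ Submodule.span (ZMod 2) {z} := by
      refine lt_of_le_of_ne le_sup_left ?_
      intro h
      have hzsup : z ∈ C2 ⊔ Submodule.span (ZMod 2) {z} :=
        Submodule.mem_sup_right (Submodule.mem_span_singleton_self z)
      rw [← h] at hzsup
      exact hz2 hzsup
    have := Submodule.finrank_lt_finrank_of_lt hlt
    exact Submodule.eq_of_le_of_finrank_le hle (by omega)
  have hsup3 : C3 ⊔ Submodule.span (ZMod 2) {z} = D := by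
    have hle : C3 ⊔ Submodule.span (ZMod 2) {z} ≤ D :=
      sup_le hC3D (Submodule.span_le.mpr (by simpa using hzD))
    have hlt : C3 < C3 ⊔ Submodule.span (ZMod 2) {z} := by
      refine lt_of_le_of_ne le_sup_left ?_
      intro h
      have hzsup : z ∈ C3 ⊔ Submodule.span (ZMod 2) {z} :=
        Submodule.mem_sup_right (Submodule.mem_span_singleton_self z)
      rw [← h] at hzsup
      exact hz3 hzsup
    have := Submodule.finrank_lt_finrank_of_lt hlt
    exact Submodule.eq_of_le_of_finrank_le hle (by omega)
  -- inf fact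
  have hinf : C2 ⊓ C3 = Cmax := by
    have hltsup : C2 < C2 ⊔ C3 := by
      refine lt_of_le_of_ne le_sup_left ?_
      intro h
      have hle32 : C3 ≤ C2 := h ▸ le_sup_right
      exact h23 ((Submodule.eq_of_le_of_finrank_le hle32 (by omega)).symm)
    have h1 := Submodule.finrank_lt_finrank_of_lt hltsup
    have h2 : Module.finrank (ZMod 2) ↥(C2 ⊔ C3) ≤ n / 2 + 1 := by
      have := Submodule.finrank_mono (sup_le hC2D hC3D)
      omega
    have h3 := Submodule.finrank_sup_add_finrank_inf_eq C2 C3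
    have h4 : Module.finrank (ZMod 2) ↥(C2 ⊓ C3) ≤ Module.finrank (ZMod 2) Cmax := by
      rw [hdim]; omega
    exact (Submodule.eq_of_le_of_finrank_le (le_inf hle2 hle3) h4).symm
  have hs23 := weights_subset Cmax C2 C3 D z hzwt hle3 hde2 hde3 hinf hC2D hzD hsup3
  have hs32 := weights_subset Cmax C3 C2 D z hzwt hle2 hde3 hde2
    (by rw [inf_comm]; exact hinf) hC3D hzD hsup2
  unfold minDist
  exact congrArg sInf (Set.Subset.antisymm hs23 hs32)
end

section
/- Let C_max ⊆ F_2^n be a self-orthogonal doubly-even code of dimension n/2 − 1, and let γ_1, γ_2 ∈ F_2^n be such that C_max + span{γ_1} and C_max + span{γ_2} are two distinct self-dual codes of length n. Then μ(γ_1, γ_2) is odd; equivalently, the inner product γ_1 · γ_2 over F_2 equals 1. -/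
open Finset

theorem mu_odd_of_distinct_selfDual_extensions {n : ℕ}
    (Cmax : Submodule (ZMod 2) (Fin n → ZMod 2))
    (hso : Cmax ≤ dualCode Cmax) (hde : DoublyEven Cmax)
    (hdim : Module.finrank (ZMod 2) Cmax = n / 2 - 1)
    (γ1 γ2 : Fin n → ZMod 2)
    (h1 : IsSelfDual (Cmax ⊔ Submodule.span (ZMod 2) {γ1}))
    (h2 : IsSelfDual (Cmax ⊔ Submodule.span (ZMod 2) {γ2}))
    (hne : Cmax ⊔ Submodule.span (ZMod 2) {γ1} ≠ Cmax ⊔ Submodule.span (ZMod 2) {γ2}) :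
    Odd (mu γ1 γ2) ∧ ∑ i, γ1 i * γ2 i = 1 := by
  have h1' : (Cmax ⊔ Submodule.span (ZMod 2) {γ1}) =
      dualCode (Cmax ⊔ Submodule.span (ZMod 2) {γ1}) := h1
  have h2' : (Cmax ⊔ Submodule.span (ZMod 2) {γ2}) =
      dualCode (Cmax ⊔ Submodule.span (ZMod 2) {γ2}) := h2
  have key : ∑ i, γ1 i * γ2 i = 1 := by
    by_contra hs
    have hs0 : ∑ i, γ1 i * γ2 i = 0 := by
      have h : ∀ a : ZMod 2, a ≠ 1 → a = 0 := by decide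
      exact h _ hs
    have hγ2C2 : γ2 ∈ Cmax ⊔ Submodule.span (ZMod 2) {γ2} :=
      Submodule.mem_sup_right (Submodule.mem_span_singleton_self γ2)
    have hperpC : ∀ c ∈ Cmax, ∑ i, γ2 i * c i = 0 := by
      intro c hc
      have hc2 : c ∈ dualCode (Cmax ⊔ Submodule.span (ZMod 2) {γ2}) := by
        rw [← h2']; exact Submodule.mem_sup_left hc
      have h := hc2 γ2 hγ2C2
      calc ∑ i, γ2 i * c i = ∑ i, c i * γ2 i := by simp [mul_comm]
        _ = 0 := h
    have hdual : γ2 ∈ dualCode (Cmax ⊔ Submodule.span (ZMod 2) {γ1}) := by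
      intro c hc
      rcases Submodule.mem_sup.mp hc with ⟨a, ha, b, hb, rfl⟩
      rcases Submodule.mem_span_singleton.mp hb with ⟨r, rfl⟩
      have h21 : ∑ i, γ2 i * γ1 i = 0 := by
        calc ∑ i, γ2 i * γ1 i = ∑ i, γ1 i * γ2 i := by simp [mul_comm]
          _ = 0 := hs0
      have : ∑ i, γ2 i * (a i + r * γ1 i)
          = (∑ i, γ2 i * a i) + r * ∑ i, γ2 i * γ1 i := by
        rw [Finset.mul_sum]
        rw [← Finset.sum_add_distrib]
        apply Finset.sum_congr rfl
        intro i _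
        ring
      simp [this, hperpC a ha, h21]
    have hmem : γ2 ∈ Cmax ⊔ Submodule.span (ZMod 2) {γ1} := by
      rw [h1']; exact hdual
    have hle : Cmax ⊔ Submodule.span (ZMod 2) {γ2} ≤
        Cmax ⊔ Submodule.span (ZMod 2) {γ1} :=
      sup_le le_sup_left ((Submodule.span_singleton_le_iff_mem _ _).mpr hmem)
    have hle' : Cmax ⊔ Submodule.span (ZMod 2) {γ1} ≤
        Cmax ⊔ Submodule.span (ZMod 2) {γ2} := by
      rw [h1', h2']
      intro x hx c hc
      exact hx c (hle hc)
    exact hne (le_antisymm hle' hle)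
  refine ⟨?_, key⟩
  have hterm : ∀ a b : ZMod 2, a * b = if a = 1 ∧ b = 1 then 1 else 0 := by decide
  have hsum : ∑ i, γ1 i * γ2 i = (mu γ1 γ2 : ZMod 2) := by
    rw [mu]
    rw [← Finset.sum_boole]
    apply Finset.sum_congr rfl
    intro i _
    rw [hterm]
  rw [hsum] at key
  rcases Nat.even_or_odd (mu γ1 γ2) with he | ho
  · exfalso
    rcases he with ⟨k, hk⟩
    rw [hk, ← two_mul] at key
    push_cast at key
    rw [show (2 : ZMod 2) = 0 by decide] at key
    simp at key
  · exact ho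
end

section
/- Let n be a positive integer divisible by 8, let C be a singly-even self-dual binary code of length n with minimum distance d = d(C), and let C_max be its maximal doubly-even subcode. Then every codeword x ∈ C_max^⊥ whose weight is not divisible by 4 satisfies d ≤ w(x) ≤ n − d. -/
open Finset

/-! ### Auxiliary lemmas -/

section Aux

lemma v0 : (0 : ZMod 2).val = 0 := rfl
lemma v1 : (1 : ZMod 2).val = 1 := rfl
lemma v11 : ((1 : ZMod 2) + 1).val = 0 := rfl

lemma zmod2_cases (t : ZMod 2) : t = 0 ∨ t = 1 := by revert t; decide

lemma wt_eq_sum_val {n : ℕ} (a : Fin n → ZMod 2) : wt a = ∑ i, (a i).val := by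
  rw [wt, Finset.card_filter]
  refine Finset.sum_congr rfl fun i _ => ?_
  rcases zmod2_cases (a i) with h | h <;> simp [h, v0, v1, v11]

lemma mu_eq_sum_val {n : ℕ} (a b : Fin n → ZMod 2) :
    mu a b = ∑ i, (a i).val * (b i).val := by
  rw [mu, Finset.card_filter]
  refine Finset.sum_congr rfl fun i _ => ?_
  rcases zmod2_cases (a i) with h | h <;> rcases zmod2_cases (b i) with h' | h' <;>
    simp [h, h', v0, v1, v11]

lemma dot_eq_mu {n : ℕ} (a b : Fin n → ZMod 2) :
    ∑ i, a i * b i = ((mu a b : ℕ) : ZMod 2) := by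
  rw [mu_eq_sum_val, Nat.cast_sum]
  refine Finset.sum_congr rfl fun i _ => ?_
  rcases zmod2_cases (a i) with h | h <;> rcases zmod2_cases (b i) with h' | h' <;>
    simp [h, h', v0, v1, v11]

lemma mu_self {n : ℕ} (a : Fin n → ZMod 2) : mu a a = wt a := by
  simp only [mu_eq_sum_val, wt_eq_sum_val]
  refine Finset.sum_congr rfl fun i _ => ?_
  rcases zmod2_cases (a i) with h | h <;> simp [h, v0, v1, v11]

lemma dot_comm {n : ℕ} (a b : Fin n → ZMod 2) :
    ∑ i, a i * b i = ∑ i, b i * a i := by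
  refine Finset.sum_congr rfl fun i _ => mul_comm _ _

lemma addself {n : ℕ} (a : Fin n → ZMod 2) : a + a = 0 := by
  funext i
  rcases zmod2_cases (a i) with h | h <;>
    simp [h, show (1 : ZMod 2) + 1 = 0 from rfl]

lemma dot_add_right {n : ℕ} (v a b : Fin n → ZMod 2) :
    ∑ i, v i * (a + b) i = (∑ i, v i * a i) + ∑ i, v i * b i := by
  simp [mul_add, Finset.sum_add_distrib]

lemma dot_add_left {n : ℕ} (a b v : Fin n → ZMod 2) :
    ∑ i, (a + b) i * v i = (∑ i, a i * v i) + ∑ i, b i * v i := by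
  simp [add_mul, Finset.sum_add_distrib]

noncomputable def chi (t : ZMod 2) : ℂ := (-1 : ℂ) ^ t.val

lemma chi_zero : chi 0 = 1 := by simp [chi, v0]

lemma chi_one : chi 1 = -1 := by simp [chi, v1]

lemma chi_add (s t : ZMod 2) : chi (s + t) = chi s * chi t := by
  rcases zmod2_cases s with h | h <;> rcases zmod2_cases t with h' | h' <;>
    simp [h, h', chi_zero, chi_one, show (1 : ZMod 2) + 1 = 0 from rfl]

lemma chi_sum {ι : Type*} (s : Finset ι) (f : ι → ZMod 2) :
    chi (∑ i ∈ s, f i) = ∏ i ∈ s, chi (f i) := by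
  induction s using Finset.cons_induction with
  | empty => simp [chi_zero]
  | cons a s ha ih => rw [Finset.sum_cons, Finset.prod_cons, chi_add, ih]

lemma pow_mod4 (z : ℂ) (hz : z ^ 4 = 1) (w : ℕ) : z ^ w = z ^ (w % 4) := by
  conv_lhs => rw [← Nat.div_add_mod w 4]
  rw [pow_add, pow_mul, hz, one_pow, one_mul]

lemma I4 : Complex.I ^ 4 = 1 := by
  rw [show (4:ℕ) = 2*2 from rfl, pow_mul, Complex.I_sq]; norm_num

lemma negI4 : (-Complex.I) ^ 4 = 1 := by
  rw [show (4:ℕ) = 2*2 from rfl, pow_mul]; norm_num [Complex.I_sq]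

lemma negI2 : (-Complex.I) ^ 2 = -1 := by rw [neg_sq, Complex.I_sq]

lemma onepowI8 : (1 + Complex.I) ^ 8 = 16 := by
  have h2 : (1 + Complex.I) ^ 2 = 2 * Complex.I := by
    rw [add_sq]; rw [Complex.I_sq]; ring
  rw [show (8:ℕ) = 2*4 from rfl, pow_mul, h2, mul_pow, I4]
  norm_num

lemma zmod2_sum (f : ZMod 2 → ℂ) : ∑ t, f t = f 0 + f 1 := by
  rw [show (univ : Finset (ZMod 2)) = {0, 1} from rfl]; simp

lemma gauss {n : ℕ} (c : Fin n → ZMod 2) :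
    ∑ u : Fin n → ZMod 2, Complex.I ^ wt u * chi (∑ i, u i * c i)
      = (1 + Complex.I) ^ n * (-Complex.I) ^ wt c := by
  have h1 : ∀ u : Fin n → ZMod 2, Complex.I ^ wt u * chi (∑ i, u i * c i)
      = ∏ i, (Complex.I ^ (u i).val * chi (u i * c i)) := by
    intro u
    rw [wt_eq_sum_val, ← Finset.prod_pow_eq_pow_sum, chi_sum, ← Finset.prod_mul_distrib]
  rw [Finset.sum_congr rfl (fun u _ => h1 u), ← Fintype.piFinset_univ,
    ← Finset.prod_univ_sum (fun _ => (univ : Finset (ZMod 2)))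
      (fun i t => Complex.I ^ t.val * chi (t * c i))]
  have h2 : ∀ i : Fin n, (∑ t : ZMod 2, Complex.I ^ t.val * chi (t * c i))
      = (1 + Complex.I) * (-Complex.I) ^ (c i).val := by
    intro i
    rw [zmod2_sum]
    rcases zmod2_cases (c i) with h | h <;>
      (simp [h, chi_zero, chi_one, v0, v1]; try linear_combination Complex.I_sq)
  rw [Finset.prod_congr rfl (fun i _ => h2 i), Finset.prod_mul_distrib,
    Finset.prod_const, Finset.card_univ, Fintype.card_fin,
    Finset.prod_pow_eq_pow_sum, ← wt_eq_sum_val]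

lemma orth {n : ℕ} (C : Submodule (ZMod 2) (Fin n → ZMod 2))
    [DecidablePred (· ∈ C)] (v : Fin n → ZMod 2)
    (h : ¬ ∀ c ∈ C, ∑ i, v i * c i = 0) :
    ∑ c ∈ Finset.univ.filter (· ∈ C), chi (∑ i, v i * c i) = 0 := by
  push_neg at h
  obtain ⟨c0, hc0, hvc0⟩ := h
  have hvc1 : (∑ i, v i * c0 i) = 1 := (zmod2_cases _).resolve_left hvc0
  set S := ∑ c ∈ Finset.univ.filter (· ∈ C), chi (∑ i, v i * c i) with hS
  have hmem : ∀ a : Fin n → ZMod 2, a ∈ Finset.univ.filter (· ∈ C) →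
      a + c0 ∈ Finset.univ.filter (· ∈ C) := by
    intro a ha
    simp only [Finset.mem_filter, Finset.mem_univ, true_and] at ha ⊢
    exact C.add_mem ha hc0
  have hinv : ∀ a : Fin n → ZMod 2, a + c0 + c0 = a := by
    intro a; rw [add_assoc, addself, add_zero]
  have key : S = -S := by
    have h1 : S = ∑ c ∈ Finset.univ.filter (· ∈ C), chi (∑ i, v i * (c + c0) i) :=
      hS.trans (Finset.sum_nbij' (i := fun c => c + c0) (j := fun c => c + c0)
        hmem hmem (fun a _ => hinv a) (fun a _ => hinv a)
        (fun a _ => by rw [hinv]))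
    have h2 : ∀ c : Fin n → ZMod 2, chi (∑ i, v i * (c + c0) i)
        = - chi (∑ i, v i * c i) := by
      intro c
      rw [dot_add_right, chi_add, hvc1, chi_one, mul_neg_one]
    calc S = ∑ c ∈ Finset.univ.filter (· ∈ C), chi (∑ i, v i * (c + c0) i) := h1
      _ = ∑ c ∈ Finset.univ.filter (· ∈ C), - chi (∑ i, v i * c i) :=
          Finset.sum_congr rfl (fun c _ => h2 c)
      _ = - ∑ c ∈ Finset.univ.filter (· ∈ C), chi (∑ i, v i * c i) :=
          Finset.sum_neg_distrib _
      _ = -S := by rw [← hS]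
  exact CharZero.eq_neg_self_iff.mp key

end Aux

lemma key_mem {n : ℕ} (C Cmax : Submodule (ZMod 2) (Fin n → ZMod 2))
    (hsd : C = dualCode C)
    (hCm : ∀ c, c ∈ Cmax ↔ c ∈ C ∧ 4 ∣ wt c)
    (x : Fin n → ZMod 2) (hx : ∀ c ∈ Cmax, ∑ i, x i * c i = 0)
    (hx2 : wt x % 4 = 2) (m : ℕ) (hm : n = 8 * m) : x ∈ C := by
  classical
  by_contra hxC
  -- a codeword not orthogonal to x
  have hex : ¬ ∀ c ∈ C, ∑ i, x i * c i = 0 := by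
    intro hall
    exact hxC (by rw [hsd]; exact hall)
  push_neg at hex
  obtain ⟨c0, hc0, hxc0⟩ := hex
  have hxc0' : (∑ i, x i * c0 i) = 1 := (zmod2_cases _).resolve_left hxc0
  -- every codeword has even weight
  have heven : ∀ c ∈ C, wt c % 2 = 0 := by
    intro c hc
    have hcc : ∑ i, c i * c i = 0 := by
      have := hsd ▸ hc
      exact this c hc
    rw [dot_eq_mu, mu_self] at hcc
    have := (ZMod.natCast_eq_zero_iff (wt c) 2).mp hcc
    omega
  -- the key dichotomy
  have hdichot : ∀ c ∈ C,
      (wt c % 4 = 0 ∧ (∑ i, x i * c i) = 0) ∨ (wt c % 4 = 2 ∧ (∑ i, x i * c i) = 1) := by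
    intro c hc
    have he := heven c hc
    by_cases h4 : 4 ∣ wt c
    · left
      refine ⟨by omega, hx c ((hCm c).mpr ⟨hc, h4⟩)⟩
    · right
      have h2 : wt c % 4 = 2 := by omega
      refine ⟨h2, ?_⟩
      -- c0 has weight ≡ 2 mod 4
      have hc04 : ¬ 4 ∣ wt c0 := by
        intro h
        exact hxc0 (hx c0 ((hCm c0).mpr ⟨hc0, h⟩))
      have hc02 : wt c0 % 4 = 2 := by have := heven c0 hc0; omega
      -- mu c c0 is even
      have hmu : mu c c0 % 2 = 0 := by
        have hd : ∑ i, c i * c0 i = 0 := by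
          have := hsd ▸ hc0
          rw [dot_comm]
          exact this c hc
        rw [dot_eq_mu] at hd
        have := (ZMod.natCast_eq_zero_iff (mu c c0) 2).mp hd
        omega
      have hwadd : wt (c + c0) % 4 = 0 := by
        have := wt_add_mu c c0
        omega
      have hccm : c + c0 ∈ Cmax := (hCm _).mpr ⟨C.add_mem hc hc0, by omega⟩
      have h0 := hx _ hccm
      rw [dot_add_right, hxc0'] at h0
      rcases zmod2_cases (∑ i, x i * c i) with h | h
      · rw [h] at h0; simp at h0
      · exact h
  set CF := Finset.univ.filter (· ∈ C) with hCF
  have hmemCF : ∀ c, c ∈ CF ↔ c ∈ C := by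
    intro c; simp [hCF]
  -- first evaluation of the double sum
  have hinner : ∀ c ∈ C,
      (∑ u : Fin n → ZMod 2, Complex.I ^ wt u * chi (∑ i, (u + x) i * c i))
        = (1 + Complex.I) ^ n := by
    intro c hc
    have expand : ∀ u : Fin n → ZMod 2,
        chi (∑ i, (u + x) i * c i) = chi (∑ i, u i * c i) * chi (∑ i, x i * c i) := by
      intro u
      rw [dot_add_left, chi_add]
    calc ∑ u : Fin n → ZMod 2, Complex.I ^ wt u * chi (∑ i, (u + x) i * c i)
        = ∑ u : Fin n → ZMod 2,
            (Complex.I ^ wt u * chi (∑ i, u i * c i)) * chi (∑ i, x i * c i) := by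
          refine Finset.sum_congr rfl fun u _ => ?_
          rw [expand u]; ring
      _ = (∑ u : Fin n → ZMod 2, Complex.I ^ wt u * chi (∑ i, u i * c i))
            * chi (∑ i, x i * c i) := by rw [Finset.sum_mul]
      _ = (1 + Complex.I) ^ n * (-Complex.I) ^ wt c * chi (∑ i, x i * c i) := by
          rw [gauss]
      _ = (1 + Complex.I) ^ n := by
          rcases hdichot c hc with ⟨h4, h0⟩ | ⟨h2, h1⟩
          · rw [h0, chi_zero, mul_one, pow_mod4 _ negI4, h4, pow_zero, mul_one]
          · rw [h1, chi_one, pow_mod4 _ negI4, h2, negI2]; ring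
  -- second evaluation
  have houter : ∀ u : Fin n → ZMod 2,
      (∑ c ∈ CF, Complex.I ^ wt u * chi (∑ i, (u + x) i * c i))
        = if (u + x) ∈ C then (CF.card : ℂ) * Complex.I ^ wt u else 0 := by
    intro u
    rw [← Finset.mul_sum]
    by_cases hu : u + x ∈ C
    · rw [if_pos hu]
      have : ∀ c ∈ CF, chi (∑ i, (u + x) i * c i) = 1 := by
        intro c hcm
        have hc : c ∈ C := (hmemCF c).mp hcm
        have : ∑ i, (u + x) i * c i = 0 := (hsd ▸ hu) c hc
        rw [this, chi_zero]
      rw [Finset.sum_congr rfl this, Finset.sum_const, nsmul_eq_mul, mul_one]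
      ring
    · rw [if_neg hu]
      have hno : ¬ ∀ c ∈ C, ∑ i, (u + x) i * c i = 0 := by
        intro hall
        exact hu (by rw [hsd]; exact hall)
      rw [orth C (u + x) hno, mul_zero]
  -- combine
  have hswap :
      ∑ c ∈ CF, ∑ u : Fin n → ZMod 2, Complex.I ^ wt u * chi (∑ i, (u + x) i * c i)
        = ∑ u : Fin n → ZMod 2, ∑ c ∈ CF, Complex.I ^ wt u * chi (∑ i, (u + x) i * c i) :=
    Finset.sum_comm
  have hleft :
      ∑ c ∈ CF, ∑ u : Fin n → ZMod 2, Complex.I ^ wt u * chi (∑ i, (u + x) i * c i)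
        = (CF.card : ℂ) * (1 + Complex.I) ^ n := by
    rw [Finset.sum_congr rfl (fun c hcm => hinner c ((hmemCF c).mp hcm)),
      Finset.sum_const, nsmul_eq_mul]
  have hright :
      ∑ u : Fin n → ZMod 2, ∑ c ∈ CF, Complex.I ^ wt u * chi (∑ i, (u + x) i * c i)
        = (CF.card : ℂ) * (CF.card : ℂ) * (-1) := by
    rw [Finset.sum_congr rfl (fun u _ => houter u), ← Finset.sum_filter]
    have hinv : ∀ a : Fin n → ZMod 2, a + x + x = a := by
      intro a; rw [add_assoc, addself, add_zero]
    have hbij :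
        ∑ u ∈ Finset.univ.filter (fun u => u + x ∈ C), (CF.card : ℂ) * Complex.I ^ wt u
          = ∑ c ∈ CF, (CF.card : ℂ) * Complex.I ^ wt (c + x) := by
      refine Finset.sum_nbij' (i := fun u => u + x) (j := fun c => c + x) ?_ ?_
        (fun a _ => hinv a) (fun a _ => hinv a) (fun a _ => by rw [hinv])
      · intro a ha
        simp only [Finset.mem_filter, Finset.mem_univ, true_and] at ha
        exact (hmemCF _).mpr ha
      · intro a ha
        simp only [Finset.mem_filter, Finset.mem_univ, true_and, hinv]
        exact (hmemCF a).mp ha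
    rw [hbij]
    have hterm : ∀ c ∈ CF, (CF.card : ℂ) * Complex.I ^ wt (c + x) = (CF.card : ℂ) * (-1) := by
      intro c hcm
      have hc : c ∈ C := (hmemCF c).mp hcm
      have hwt2 : wt (c + x) % 4 = 2 := by
        have hid := wt_add_mu c x
        have hmucx : (mu c x : ZMod 2) = ∑ i, x i * c i := by
          rw [dot_comm, dot_eq_mu]
        rcases hdichot c hc with ⟨h4, h0⟩ | ⟨h2, h1⟩
        · rw [h0] at hmucx
          have := (ZMod.natCast_eq_zero_iff (mu c x) 2).mp hmucx
          omega
        · rw [h1] at hmucx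
          have hodd : mu c x % 2 = 1 := by
            rcases Nat.even_or_odd (mu c x) with he | ho
            · exfalso
              have : (mu c x : ZMod 2) = 0 :=
                (ZMod.natCast_eq_zero_iff (mu c x) 2).mpr he.two_dvd
              rw [this] at hmucx; simp at hmucx
            · exact Nat.odd_iff.mp ho
          omega
      rw [pow_mod4 _ I4, hwt2, Complex.I_sq]
    rw [Finset.sum_congr rfl hterm, Finset.sum_const, nsmul_eq_mul]
    ring
  have hcomb : (CF.card : ℂ) * (1 + Complex.I) ^ n
      = (CF.card : ℂ) * ((CF.card : ℂ) * (-1)) := by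
    rw [← hleft, hswap, hright]; ring
  have hcard0 : (CF.card : ℂ) ≠ 0 := by
    have : (0 : Fin n → ZMod 2) ∈ CF := (hmemCF 0).mpr C.zero_mem
    have hpos : 0 < CF.card := Finset.card_pos.mpr ⟨0, this⟩
    exact Nat.cast_ne_zero.mpr hpos.ne'
  have hfin : (1 + Complex.I) ^ n = (CF.card : ℂ) * (-1) :=
    mul_left_cancel₀ hcard0 hcomb
  have h16c : (1 + Complex.I) ^ n = (16 : ℂ) ^ m := by
    rw [hm, pow_mul, onepowI8]
  have hfin2 : (16 : ℂ) ^ m = (CF.card : ℂ) * (-1) := by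
    rw [← h16c]; exact hfin
  have hnat : ((16 ^ m + CF.card : ℕ) : ℂ) = 0 := by
    push_cast
    linear_combination hfin2
  have := Nat.cast_eq_zero.mp hnat
  have h16 : 0 < 16 ^ m := Nat.pow_pos (by norm_num)
  omega

theorem weight_bounds_in_dual_of_Cmax {n : ℕ} (hn : 0 < n) (h8 : 8 ∣ n)
    (C Cmax : Submodule (ZMod 2) (Fin n → ZMod 2))
    (hsd : IsSelfDual C) (hse : SinglyEven C)
    (hmax : (Cmax : Set (Fin n → ZMod 2)) = {c | c ∈ C ∧ 4 ∣ wt c}) :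
    ∀ x ∈ dualCode Cmax, ¬ 4 ∣ wt x →
      minDist C ≤ wt x ∧ wt x ≤ n - minDist C := by
  classical
  intro x hx hx4
  have hsd' : C = dualCode C := hsd
  have hCm : ∀ c, c ∈ Cmax ↔ c ∈ C ∧ 4 ∣ wt c := fun c => by
    rw [← SetLike.mem_coe, hmax]; exact Iff.rfl
  set one : Fin n → ZMod 2 := fun _ => 1 with hone
  have hsq : ∀ c : Fin n → ZMod 2, ∑ i, c i * c i = ((wt c : ℕ) : ZMod 2) := by
    intro c; rw [dot_eq_mu, mu_self]
  have honeC : one ∈ C := by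
    rw [hsd']
    intro c hc
    have hc' : ∑ i, c i * c i = 0 := (hsd' ▸ hc) c hc
    calc ∑ i, one i * c i = ∑ i, c i * c i := by
          refine Finset.sum_congr rfl fun i _ => ?_
          rcases zmod2_cases (c i) with h | h <;> simp [hone, h]
      _ = 0 := hc'
  have hwtone : wt one = n := by
    rw [wt]
    have : Finset.univ.filter (fun i => one i ≠ 0) = Finset.univ := by
      refine Finset.filter_true_of_mem fun i _ => ?_
      simp [hone]
    rw [this, Finset.card_univ, Fintype.card_fin]
  have h4n : 4 ∣ n := by
    obtain ⟨m, hm⟩ := h8; exact ⟨2 * m, by omega⟩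
  have honeMax : one ∈ Cmax := (hCm one).mpr ⟨honeC, by rw [hwtone]; exact h4n⟩
  have hx2 : wt x % 4 = 2 := by
    have h0 : ((wt x : ℕ) : ZMod 2) = 0 := by
      rw [← hsq x, ← hx one honeMax]
      refine Finset.sum_congr rfl fun i _ => ?_
      rcases zmod2_cases (x i) with h | h <;> simp [hone, h]
    have := (ZMod.natCast_eq_zero_iff _ 2).mp h0
    omega
  obtain ⟨m, hm⟩ := h8
  have hxC : x ∈ C := key_mem C Cmax hsd' hCm x hx hx2 m hm
  have hx0 : x ≠ 0 := by
    intro h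
    have hw0 : wt x = 0 := by
      rw [h, wt]
      simp
    omega
  have hd1 : minDist C ≤ wt x := Nat.sInf_le ⟨x, hxC, hx0, rfl⟩
  have hxoneC : x + one ∈ C := C.add_mem hxC honeC
  have hwadd : wt (x + one) + wt x = n := by
    rw [wt, wt]
    have heq : Finset.univ.filter (fun i => (x + one) i ≠ 0)
        = Finset.univ.filter (fun i => ¬ x i ≠ 0) := by
      refine Finset.filter_congr fun i _ => ?_
      rcases zmod2_cases (x i) with h | h <;>
        simp [hone, h, show (1 : ZMod 2) + 1 = 0 from rfl]
    rw [heq, add_comm]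
    have := Finset.card_filter_add_card_filter_not
      (s := (Finset.univ : Finset (Fin n))) (p := fun i => x i ≠ 0)
    rw [Finset.card_univ, Fintype.card_fin] at this
    exact this
  have hxone0 : x + one ≠ 0 := by
    intro h
    have hxo : x = one := by
      have h1 : x = (x + one) + one := by rw [add_assoc, addself, add_zero]
      rw [h, zero_add] at h1
      exact h1
    rw [hxo, hwtone] at hx2
    omega
  have hd2 : minDist C ≤ wt (x + one) := Nat.sInf_le ⟨x + one, hxoneC, hxone0, rfl⟩
  exact ⟨hd1, by omega⟩
end
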